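/- Let v be a valuated matroid of rank r on ground set E. Then the valuated basis exchange axiom is equivalent to the tropical Plücker relations: for all A, B ∈ (E choose r) and a ∈ A \ B, v(A)+v(B) ≥ min_{b∈B}[v((A\{a})∪{b}) + v((B\{b})∪{a})] holds for all A, B, a if and only if for every (r+1)-subset τ and every (r−1)-subset σ of E, the minimum of {v(τ \ {j}) + v(σ ∪ {j}) : j ∈ τ \ σ} is attained at least twice (or is ∞). -/
import Mathlib


/-- The minimum of `g` over `τ` is "attained at least twice": either all
values are `∞`, or at least two distinct indices realize a finite minimum. -/
def MinTwice {E : Type*} (τ : Finset E) (g : E → WithTop ℝ) : Prop :=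
  (∀ e ∈ τ, g e = ⊤) ∨
    ∃ e₁ ∈ τ, ∃ e₂ ∈ τ, e₁ ≠ e₂ ∧ g e₁ = g e₂ ∧ g e₁ ≠ ⊤ ∧ ∀ e ∈ τ, g e₁ ≤ g e

/-- For a function `v` on `(r+1)`-subsets of `E` (with value `∞` on sets of the
wrong cardinality, and not identically `∞`), the valuated basis exchange axiom
is equivalent to the tropical (three-term) Plücker relations: for every
`(r+2)`-subset `τ` and every `r`-subset `σ`, the minimum of
`v(τ \ {j}) + v(σ ∪ {j})` over `j ∈ τ \ σ` is attained at least twice (or is `∞`). -/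
theorem exchange_iff_tropical_plucker
    {E : Type*} [DecidableEq E] (r : ℕ)
    (v : Finset E → WithTop ℝ)
    (hcard : ∀ A : Finset E, A.card ≠ r + 1 → v A = ⊤)
    (hex : ∃ A : Finset E, v A ≠ ⊤) :
    (∀ A B : Finset E, A.card = r + 1 → (hB : B.card = r + 1) →
      ∀ a ∈ A, a ∉ B →
        B.inf' (Finset.card_pos.mp (by omega))
            (fun b => v (insert b (A.erase a)) + v (insert a (B.erase b)))
          ≤ v A + v B) ↔
    (∀ τ σ : Finset E, τ.card = r + 2 → σ.card = r →
      MinTwice (τ \ σ) (fun j => v (τ.erase j) + v (insert j σ))) := by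
  constructor
  · -- exchange ⇒ Plücker
    intro hEx τ σ hτ hσ
    set g : E → WithTop ℝ := fun j => v (τ.erase j) + v (insert j σ) with hg
    by_cases hall : ∀ e ∈ τ \ σ, g e = ⊤
    · exact Or.inl hall
    push_neg at hall
    obtain ⟨e₀, he₀, he₀top⟩ := hall
    obtain ⟨a, haTS, hamin⟩ := Finset.exists_min_image (τ \ σ) g ⟨e₀, he₀⟩
    have hatop : g a ≠ ⊤ := fun h => he₀top (top_le_iff.mp (h ▸ hamin e₀ he₀))
    obtain ⟨haτ, haσ⟩ := Finset.mem_sdiff.mp haTS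
    have hAcard : (insert a σ).card = r + 1 := by
      rw [Finset.card_insert_of_notMem haσ, hσ]
    have hBcard : (τ.erase a).card = r + 1 := by
      rw [Finset.card_erase_of_mem haτ, hτ]
      omega
    have key := hEx (insert a σ) (τ.erase a) hAcard hBcard a
      (Finset.mem_insert_self a σ) (fun h => (Finset.mem_erase.mp h).1 rfl)
    have hAea : (insert a σ).erase a = σ := Finset.erase_insert haσ
    obtain ⟨b, hbB, hbeq⟩ := Finset.exists_mem_eq_inf'
      (Finset.card_pos.mp (by rw [hBcard]; omega))
      (fun b => v (insert b ((insert a σ).erase a)) + v (insert a ((τ.erase a).erase b)))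
    rw [hbeq] at key
    obtain ⟨hba, hbτ⟩ := Finset.mem_erase.mp hbB
    have hVAB : v (insert a σ) + v (τ.erase a) = g a := by
      rw [hg, add_comm]
    rw [hVAB] at key
    have hbσ : b ∉ σ := by
      intro hbσ
      rw [hAea, Finset.insert_eq_self.mpr hbσ] at key
      rw [hcard σ (by omega), top_add] at key
      exact hatop (top_le_iff.mp key)
    have hins : insert a ((τ.erase a).erase b) = τ.erase b := by
      rw [Finset.erase_right_comm, Finset.insert_erase
        (Finset.mem_erase.mpr ⟨fun h => hba h.symm, haτ⟩)]
    rw [hAea, hins] at key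
    have hkey : g b ≤ g a := by rw [hg]; rw [add_comm] at key; exact key
    have hbTS : b ∈ τ \ σ := Finset.mem_sdiff.mpr ⟨hbτ, hbσ⟩
    have hgab : g a = g b := le_antisymm (hamin b hbTS) hkey
    exact Or.inr ⟨a, haTS, b, hbTS, fun h => hba h.symm, hgab, hatop, hamin⟩
  · -- Plücker ⇒ exchange
    intro hP A B hA hB a haA haB
    by_cases hAB : v A + v B = ⊤
    · rw [hAB]; exact le_top
    set τ := insert a B with hτdef
    set σ := A.erase a with hσdef
    have hτ : τ.card = r + 2 := by
      rw [hτdef, Finset.card_insert_of_notMem haB, hB]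
    have hσ : σ.card = r := by
      rw [hσdef, Finset.card_erase_of_mem haA, hA]
      omega
    have hτea : τ.erase a = B := Finset.erase_insert haB
    have hiaσ : insert a σ = A := Finset.insert_erase haA
    have hga : v (τ.erase a) + v (insert a σ) = v A + v B := by
      rw [hτea, hiaσ, add_comm]
    have haTS : a ∈ τ \ σ := Finset.mem_sdiff.mpr
      ⟨Finset.mem_insert_self a B, fun h => (Finset.mem_erase.mp h).1 rfl⟩
    rcases hP τ σ hτ hσ with hall | ⟨e₁, he₁, e₂, he₂, hne, heq, hfin, hmin⟩
    · exact absurd (hga ▸ hall a haTS) hAB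
    · -- pick the one among e₁, e₂ that differs from a
      obtain ⟨e, heTS, hea, hge⟩ :
          ∃ e, e ∈ τ \ σ ∧ e ≠ a ∧
            v (τ.erase e) + v (insert e σ) ≤ v A + v B := by
        have h2 := hmin a haTS
        simp only at h2 heq
        by_cases h1 : e₁ = a
        · exact ⟨e₂, he₂, fun h => hne (h1.trans h.symm),
            le_trans (heq ▸ h2) hga.le⟩
        · exact ⟨e₁, he₁, h1, le_trans h2 hga.le⟩
      obtain ⟨heτ, heσ⟩ := Finset.mem_sdiff.mp heTS
      have heB : e ∈ B := by
        rcases Finset.mem_insert.mp heτ with h | h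
        · exact absurd h hea
        · exact h
      have hterm : v (insert e (A.erase a)) + v (insert a (B.erase e))
          ≤ v A + v B := by
        have h1 : insert a (B.erase e) = τ.erase e := by
          rw [hτdef, Finset.erase_insert_of_ne (fun h => hea h.symm)]
        rw [h1, ← hσdef]
        rwa [add_comm] at hge
      exact le_trans (Finset.inf'_le _ heB) hterm
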